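/- For every field k, the periplectic Brauer algebra A₂ over k is 3-dimensional as a k-vector space; more precisely, the images of 1, s and ε in the quotient form a k-basis of A₂. -/

import Mathlib

namespace PeriplecticPaper

/-- The two generators `s` and `ε` of the periplectic Brauer algebra `A₂`. -/
inductive PBGen : Type
  | s
  | e

open FreeAlgebra

/-- The defining relations of the periplectic Brauer algebra `A₂`:
`s² = 1`, `ε² = 0`, `s·ε = ε` and `ε·s = -ε`.  Taking the ring quotient by this
relation is the quotient of the free algebra on `s, ε` by the two-sided ideal
generated by `s² - 1`, `ε²`, `s·ε - ε` and `ε·s + ε`. -/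
inductive A2Rel (k : Type) [Field k] :
    FreeAlgebra k PBGen → FreeAlgebra k PBGen → Prop
  | ss : A2Rel k (ι k PBGen.s * ι k PBGen.s) 1
  | ee : A2Rel k (ι k PBGen.e * ι k PBGen.e) 0
  | se : A2Rel k (ι k PBGen.s * ι k PBGen.e) (ι k PBGen.e)
  | es : A2Rel k (ι k PBGen.e * ι k PBGen.s) (-(ι k PBGen.e))

/-- The periplectic Brauer algebra `A₂` over the field `k`:  the quotient of the free
associative unital `k`-algebra on generators `s, ε` by the two-sided ideal generated by
`s² - 1`, `ε²`, `s·ε - ε` and `ε·s + ε`. -/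
abbrev A2 (k : Type) [Field k] : Type := RingQuot (A2Rel k)

/-- The image in `A₂` of the generator `s`. -/
noncomputable def sBar (k : Type) [Field k] : A2 k :=
  RingQuot.mkAlgHom k (A2Rel k) (ι k PBGen.s)

/-- The image in `A₂` of the generator `ε`. -/
noncomputable def eBar (k : Type) [Field k] : A2 k :=
  RingQuot.mkAlgHom k (A2Rel k) (ι k PBGen.e)

variable (k : Type) [Field k]

lemma rel_ss : sBar k * sBar k = 1 := by
  have h := RingQuot.mkAlgHom_rel k (A2Rel.ss (k := k))
  simpa [sBar, map_mul, map_one] using h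

lemma rel_ee : eBar k * eBar k = 0 := by
  have h := RingQuot.mkAlgHom_rel k (A2Rel.ee (k := k))
  simpa [eBar, map_mul, map_zero] using h

lemma rel_se : sBar k * eBar k = eBar k := by
  have h := RingQuot.mkAlgHom_rel k (A2Rel.se (k := k))
  simpa [sBar, eBar, map_mul] using h

lemma rel_es : eBar k * sBar k = -eBar k := by
  have h := RingQuot.mkAlgHom_rel k (A2Rel.es (k := k))
  simpa [sBar, eBar, map_mul, map_neg] using h

/-- matrix images of the generators -/
noncomputable def mrep : PBGen → Matrix (Fin 3) (Fin 3) k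
  | PBGen.s => !![0, 1, 0; 1, 0, 0; 0, 0, 1]
  | PBGen.e => !![0, 0, 0; 0, 0, 0; 1, -1, 0]

noncomputable def φ : A2 k →ₐ[k] Matrix (Fin 3) (Fin 3) k :=
  RingQuot.liftAlgHom k ⟨FreeAlgebra.lift k (mrep k), by
    rintro x y (_ | _ | _ | _) <;>
      simp only [map_mul, map_one, map_zero, map_neg, FreeAlgebra.lift_ι_apply, mrep] <;>
      ext i j <;> fin_cases i <;> fin_cases j <;>
      simp [Matrix.mul_apply, Matrix.one_apply, Fin.sum_univ_three, Matrix.vecHead, Matrix.vecTail]⟩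

lemma φ_s : φ k (sBar k) = !![0, 1, 0; 1, 0, 0; 0, 0, 1] := by
  simp [φ, sBar, RingQuot.liftAlgHom_mkAlgHom_apply, mrep]

lemma φ_e : φ k (eBar k) = !![0, 0, 0; 0, 0, 0; 1, -1, 0] := by
  simp [φ, eBar, RingQuot.liftAlgHom_mkAlgHom_apply, mrep]

noncomputable def v : Fin 3 → A2 k := ![1, sBar k, eBar k]

lemma v_indep : LinearIndependent k (v k) := by
  rw [Fintype.linearIndependent_iff]
  intro g hg
  have h := congrArg (φ k) hg
  simp only [map_sum, map_smul, map_zero] at h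
  rw [Fin.sum_univ_three] at h
  simp only [v, Matrix.cons_val_zero, Matrix.cons_val_one, Matrix.cons_val_two,
    Matrix.tail_cons, Matrix.head_cons, map_one, φ_s, φ_e] at h
  have h00 := congrFun (congrFun h 0) 0
  have h01 := congrFun (congrFun h 0) 1
  have h20 := congrFun (congrFun h 2) 0
  simp [Matrix.add_apply, Matrix.smul_apply, Matrix.one_apply, Matrix.zero_apply,
    Matrix.cons_val_zero, Matrix.cons_val_one, Matrix.head_cons] at h00 h01 h20
  intro i
  fin_cases i
  · exact h00
  · exact h01
  · exact h20

lemma v_span : ⊤ ≤ Submodule.span k (Set.range (v k)) := by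
  intro x _
  set W := Submodule.span k (Set.range (v k)) with hW
  have h1 : (1 : A2 k) ∈ W := Submodule.subset_span ⟨0, rfl⟩
  have hs : sBar k ∈ W := Submodule.subset_span ⟨1, rfl⟩
  have he : eBar k ∈ W := Submodule.subset_span ⟨2, rfl⟩
  -- multiplication stability
  have key : ∀ x ∈ W, ∀ y ∈ W, x * y ∈ W := by
    intro x hx
    induction hx using Submodule.span_induction with
    | mem x hxmem =>
      intro y hy
      induction hy using Submodule.span_induction with
      | mem y hymem =>
        obtain ⟨i, rfl⟩ := hxmem
        obtain ⟨j, rfl⟩ := hymem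
        fin_cases i <;> fin_cases j <;>
          simp [v, rel_ss, rel_ee, rel_se, rel_es] <;>
          first
            | exact h1 | exact hs | exact he | exact W.zero_mem
            | exact W.neg_mem he
      | zero => simpa using W.zero_mem
      | add a b _ _ ha hb => simpa [mul_add] using W.add_mem ha hb
      | smul c a _ ha => simpa [mul_smul_comm] using W.smul_mem c ha
    | zero => intro y hy; simpa using W.zero_mem
    | add a b _ _ ha hb => intro y hy; simpa [add_mul] using W.add_mem (ha y hy) (hb y hy)
    | smul c a _ ha => intro y hy; simpa [smul_mul_assoc] using W.smul_mem c (ha y hy)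
  obtain ⟨a, rfl⟩ := RingQuot.mkAlgHom_surjective k (A2Rel k) x
  induction a using FreeAlgebra.induction with
  | grade0 r =>
    have hr : (RingQuot.mkAlgHom k (A2Rel k)) (algebraMap k _ r) = r • (1 : A2 k) := by
      simp [Algebra.algebraMap_eq_smul_one]
    rw [hr]; exact W.smul_mem r h1
  | grade1 g =>
    cases g
    · exact hs
    · exact he
  | mul a b ha hb => rw [map_mul]; exact key _ (ha Submodule.mem_top) _ (hb Submodule.mem_top)
  | add a b ha hb => rw [map_add]; exact W.add_mem (ha Submodule.mem_top) (hb Submodule.mem_top)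

noncomputable def basisA2 : Module.Basis (Fin 3) k (A2 k) :=
  Module.Basis.mk (v_indep k) (v_span k)

/-- For every field `k`, the periplectic Brauer algebra `A₂` over `k` is
`3`-dimensional over `k`; more precisely, the images of `1`, `s` and `ε` in the
quotient form a `k`-basis of `A₂`. -/
theorem statement9 (k : Type) [Field k] :
    Module.finrank k (A2 k) = 3 ∧
    ∃ b : Module.Basis (Fin 3) k (A2 k),
      b 0 = 1 ∧ b 1 = sBar k ∧ b 2 = eBar k := by
  refine ⟨?_, basisA2 k, ?_, ?_, ?_⟩
  · rw [Module.finrank_eq_card_basis (basisA2 k), Fintype.card_fin]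
  all_goals simp [basisA2, Module.Basis.mk_apply, v]

end PeriplecticPaper
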